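/- Let U_1,...,U_n be c-dimensional subspaces of ℂ^d with orthogonal projections P_1,...,P_n. Then max_{j≠j'} Tr(P_j P_{j'}) = c(nc-d)/(d(n-1)) if and only if both: (i) Σ_j P_j = (nc/d)I (tight fusion frame), and (ii) Tr(P_j P_{j'}) is constant over all j ≠ j' (equi-chordal). -/

import Mathlib

open Matrix


lemma aux_eig_mem {d : ℕ} (A : Matrix (Fin d) (Fin d) ℂ) (hA : A.IsHermitian)
    (h : A * A = A) (i : Fin d) : hA.eigenvalues i = 0 ∨ hA.eigenvalues i = 1 := by
  set v := (WithLp.equiv 2 _) (hA.eigenvectorBasis i) with hv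
  have h1 : A *ᵥ v = hA.eigenvalues i • v := hA.mulVec_eigenvectorBasis i
  have h2 : A *ᵥ (A *ᵥ v) = (hA.eigenvalues i * hA.eigenvalues i) • v := by
    rw [h1, Matrix.mulVec_smul, h1, smul_smul]
  rw [Matrix.mulVec_mulVec, h, h1] at h2
  have hvne : v ≠ 0 := by
    have := hA.eigenvectorBasis.orthonormal.ne_zero i
    simpa [hv] using this
  have h3 : (hA.eigenvalues i * hA.eigenvalues i - hA.eigenvalues i) • v = 0 := by
    rw [sub_smul, h2, sub_self]
  rcases smul_eq_zero.mp h3 with h4 | h4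
  · have : hA.eigenvalues i * (hA.eigenvalues i - 1) = 0 := by ring_nf; linarith
    rcases mul_eq_zero.mp this with h5 | h5
    · exact Or.inl h5
    · exact Or.inr (by linarith)
  · exact absurd h4 hvne

lemma aux_trace {d : ℕ} (A : Matrix (Fin d) (Fin d) ℂ) (hA : A.IsHermitian)
    (h : A * A = A) : A.trace = (A.rank : ℂ) := by
  classical
  have htr : A.trace = ∑ i, (hA.eigenvalues i : ℂ) := by
    conv_lhs => rw [hA.spectral_theorem]
    rw [Unitary.conjStarAlgAut_apply, Matrix.trace_mul_comm, ← mul_assoc, Unitary.coe_star_mul_self, one_mul,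
      Matrix.trace_diagonal]
    rfl
  rw [htr, hA.rank_eq_card_non_zero_eigs, Fintype.card_subtype]
  rw [Finset.card_filter]
  push_cast
  refine Finset.sum_congr rfl fun i _ => ?_
  rcases aux_eig_mem A hA h i with h0 | h1
  · simp [h0]
  · simp [h1]

/-- Equality in the simplex bound holds iff the subspaces form an equi-chordal
tight fusion frame: `max_{j≠j'} Tr(P_j P_{j'}) = c(nc-d)/(d(n-1))` iff
`Σ_j P_j = (nc/d)I` and `Tr(P_j P_{j'})` is constant over `j ≠ j'`. -/
theorem simplex_bound_equality {d c n : ℕ} (hn : 2 ≤ n) (hc : 1 ≤ c) (hcd : c ≤ d)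
    (P : Fin n → Matrix (Fin d) (Fin d) ℂ)
    (hherm : ∀ j, (P j).IsHermitian) (hidem : ∀ j, P j * P j = P j)
    (hrank : ∀ j, (P j).rank = c)
    (hne : (Finset.univ.filter (fun p : Fin n × Fin n => p.1 ≠ p.2)).Nonempty) :
    (Finset.univ.filter (fun p : Fin n × Fin n => p.1 ≠ p.2)).sup' hne
        (fun p => (Matrix.trace (P p.1 * P p.2)).re)
      = (c : ℝ) * ((n : ℝ) * c - d) / (d * ((n : ℝ) - 1))
    ↔ ((∑ j, P j = (((n : ℂ) * c) / d) • 1) ∧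
        (∃ β : ℝ, ∀ j j', j ≠ j' → (Matrix.trace (P j * P j')).re = β)) := by
  classical
  have htr : ∀ j, (P j).trace = (c : ℂ) := fun j => by
    rw [aux_trace _ (hherm j) (hidem j), hrank j]
  set F := Finset.univ.filter (fun p : Fin n × Fin n => p.1 ≠ p.2) with hF
  set t : Fin n × Fin n → ℝ := fun p => (Matrix.trace (P p.1 * P p.2)).re with ht
  set S : Matrix (Fin d) (Fin d) ℂ := ∑ j, P j with hSdef
  set α : ℝ := ((n : ℝ) * c) / d with hα
  set T : Matrix (Fin d) (Fin d) ℂ := S - (α : ℂ) • 1 with hT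
  set r : ℝ := ∑ i, ∑ k, Complex.normSq (T k i) with hr
  have hd0 : (d : ℝ) ≠ 0 := Nat.cast_ne_zero.mpr (by omega)
  -- S hermitian
  have hSherm : S.IsHermitian := by
    unfold S
    exact Finset.sum_induction P Matrix.IsHermitian (fun a b ha hb => ha.add hb)
      (Matrix.isHermitian_zero) (fun j _ => hherm j)
  have hTherm : T.IsHermitian := by
    unfold T
    simp only [Matrix.IsHermitian, conjTranspose_sub, conjTranspose_smul, hSherm.eq,
      conjTranspose_one, Complex.star_def, Complex.conj_ofReal]
  -- trace S
  have htrS : S.trace = ((n : ℝ) * c : ℝ) := by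
    unfold S
    rw [Matrix.trace_sum]
    simp [htr]
  -- trace(T*T) = r
  have htrT : Matrix.trace (T * T) = (r : ℂ) := by
    have hentry : ∀ i k, T i k = (starRingEnd ℂ) (T k i) := fun i k => (hTherm.apply i k).symm
    rw [hr]
    push_cast
    simp only [Matrix.trace, Matrix.diag, Matrix.mul_apply]
    rw [Finset.sum_comm]
    refine Finset.sum_congr rfl fun i _ => Finset.sum_congr rfl fun k _ => ?_
    rw [Complex.normSq_eq_conj_mul_self, ← hentry, mul_comm]
  -- expansion
  have hexp : T * T = S * S - (α : ℂ) • S - (α : ℂ) • S + ((α : ℂ) * α) • 1 := by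
    rw [hT]
    simp only [sub_mul, mul_sub, smul_sub, smul_mul_assoc, mul_smul_comm, one_mul, mul_one,
      smul_smul]
    abel
  have hSS : (Matrix.trace (S * S)).re = r + 2 * α * ((n : ℝ) * c) - α ^ 2 * d := by
    have h1 : Matrix.trace (T * T)
        = Matrix.trace (S * S) - ((2 * α * ((n:ℝ) * c) - α ^ 2 * d : ℝ) : ℂ) := by
      rw [hexp]
      simp only [Matrix.trace_add, Matrix.trace_sub, Matrix.trace_smul, Matrix.trace_one, htrS,
        smul_eq_mul, Fintype.card_fin]
      push_cast
      ring
    rw [htrT] at h1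
    have h2 : Matrix.trace (S * S)
        = ((r + 2 * α * ((n:ℝ) * c) - α ^ 2 * d : ℝ) : ℂ) := by
      push_cast at h1 ⊢
      linear_combination -h1
    rw [h2, Complex.ofReal_re]
  -- sum over off-diagonal
  have hdiag : ∑ p ∈ Finset.univ.filter (fun p : Fin n × Fin n => ¬ p.1 ≠ p.2),
      Matrix.trace (P p.1 * P p.2) = ((n : ℝ) * c : ℝ) := by
    rw [Finset.sum_filter, Fintype.sum_prod_type]
    simp only [not_not]
    have : ∀ j : Fin n, (∑ j' : Fin n, if j = j' then Matrix.trace (P j * P j') else 0)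
        = (c : ℂ) := by
      intro j
      rw [Finset.sum_ite_eq Finset.univ j (fun j' => Matrix.trace (P j * P j'))]
      simp [hidem j, htr j]
    rw [Finset.sum_congr rfl fun j _ => this j]
    push_cast
    simp [mul_comm]
  have hsumC : ∑ p ∈ F, Matrix.trace (P p.1 * P p.2)
      = Matrix.trace (S * S) - ((n : ℝ) * c : ℝ) := by
    have h1 := Finset.sum_filter_add_sum_filter_not Finset.univ
      (fun p : Fin n × Fin n => p.1 ≠ p.2) (fun p => Matrix.trace (P p.1 * P p.2))
    have h2 : ∑ p : Fin n × Fin n, Matrix.trace (P p.1 * P p.2) = Matrix.trace (S * S) := by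
      rw [hSdef, Finset.sum_mul_sum]
      rw [Matrix.trace_sum]
      rw [Fintype.sum_prod_type]
      exact Finset.sum_congr rfl fun j _ => (Matrix.trace_sum _ _).symm
    rw [hdiag, h2] at h1
    rw [← hF] at h1
    linear_combination h1
  have hsumF : ∑ p ∈ F, t p = r + 2 * α * ((n : ℝ) * c) - α ^ 2 * d - (n : ℝ) * c := by
    have := congrArg Complex.re hsumC
    rw [Complex.re_sum] at this
    simp only [Complex.sub_re, Complex.ofReal_re] at this
    rw [ht]
    rw [this, hSS]
  have hrpos : 0 ≤ r := Finset.sum_nonneg fun i _ =>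
    Finset.sum_nonneg fun k _ => Complex.normSq_nonneg _
  have hαc : ((α : ℝ) : ℂ) = ((n : ℂ) * c) / d := by rw [hα]; push_cast; ring
  have hSiff : S = (((n : ℂ) * c) / d) • 1 ↔ r = 0 := by
    rw [← hαc]
    constructor
    · intro h
      have hT0 : T = 0 := by rw [hT, h, sub_self]
      rw [hr, hT0]
      simp
    · intro h
      have hT0 : T = 0 := by
        ext i k
        have h1 : ∀ i' ∈ (Finset.univ : Finset (Fin d)),
            (∑ k', Complex.normSq (T k' i')) = 0 := by
          intro i' _
          have := (Finset.sum_eq_zero_iff_of_nonneg (fun i'' _ =>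
            Finset.sum_nonneg fun k' _ => Complex.normSq_nonneg (T k' i''))).mp (hr ▸ h)
          exact this i' (Finset.mem_univ i')
        have h2 := (Finset.sum_eq_zero_iff_of_nonneg (fun k' _ =>
          Complex.normSq_nonneg (T k' k))).mp (h1 k (Finset.mem_univ k)) i (Finset.mem_univ i)
        simpa using Complex.normSq_eq_zero.mp h2
      have h3 : S - (α : ℂ) • 1 = 0 := by rw [← hT, hT0]
      exact sub_eq_zero.mp h3
  -- card F
  have hFcard : (F.card : ℝ) = (n : ℝ) * ((n : ℝ) - 1) := by
    have hFo : F = (Finset.univ : Finset (Fin n)).offDiag := by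
      ext p
      simp [hF, Finset.mem_offDiag]
    rw [hFo, Finset.offDiag_card, Finset.card_univ, Fintype.card_fin]
    have h1 : n ≤ n * n := Nat.le_mul_of_pos_left n (by omega)
    push_cast [Nat.cast_sub h1]
    ring
  have hn1 : (n : ℝ) - 1 ≠ 0 := by
    have h2 : (2 : ℝ) ≤ n := by exact_mod_cast hn
    linarith
  set B : ℝ := (c : ℝ) * ((n : ℝ) * c - d) / (d * ((n : ℝ) - 1)) with hB
  have hkey : (F.card : ℝ) * B = 2 * α * ((n : ℝ) * c) - α ^ 2 * d - (n : ℝ) * c := by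
    rw [hFcard, hB, hα]
    field_simp
    ring
  have hsumF' : ∑ p ∈ F, t p = r + (F.card : ℝ) * B := by rw [hsumF, hkey]; ring
  have hcardpos : (0 : ℝ) < F.card := by
    have := Finset.card_pos.mpr hne
    exact_mod_cast this
  constructor
  · intro h
    have hle : ∀ p ∈ F, t p ≤ B := fun p hp => h ▸ Finset.le_sup' t hp
    have hsum_le : ∑ p ∈ F, t p ≤ (F.card : ℝ) * B := by
      calc ∑ p ∈ F, t p ≤ ∑ _p ∈ F, B := Finset.sum_le_sum hle
        _ = (F.card : ℝ) * B := by rw [Finset.sum_const, nsmul_eq_mul]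
    have hr0 : r = 0 := le_antisymm (by linarith) hrpos
    refine ⟨hSiff.mpr hr0, B, fun j j' hjj => ?_⟩
    have hmem : (j, j') ∈ F := by simp [hF, hjj]
    by_contra hne2
    have hlt : t (j, j') < B := lt_of_le_of_ne (hle _ hmem) hne2
    have hslt : ∑ p ∈ F, t p < ∑ _p ∈ F, B :=
      Finset.sum_lt_sum hle ⟨(j, j'), hmem, hlt⟩
    rw [Finset.sum_const, nsmul_eq_mul] at hslt
    linarith
  · rintro ⟨hS1, β, hβ⟩
    have hr0 : r = 0 := hSiff.mp hS1
    have hconst : ∀ p ∈ F, t p = β := by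
      intro p hp
      have hp12 : p.1 ≠ p.2 := by
        have := Finset.mem_filter.mp (hF ▸ hp)
        exact this.2
      exact hβ p.1 p.2 hp12
    have hsum2 : ∑ p ∈ F, t p = (F.card : ℝ) * β := by
      rw [Finset.sum_congr rfl hconst, Finset.sum_const, nsmul_eq_mul]
    have hβB : β = B := by
      have : (F.card : ℝ) * β = (F.card : ℝ) * B := by linarith
      exact mul_left_cancel₀ (ne_of_gt hcardpos) this
    have hconst' : ∀ p ∈ F, t p = B := fun p hp => (hconst p hp).trans hβB
    rw [Finset.sup'_congr hne rfl hconst', Finset.sup'_const]
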